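/- Let u, v, u', v' ∈ ℂ² be such that p := u·uᴴ + v·vᴴ is invertible and u·uᴴ + v·vᴴ = u'·u'ᴴ + v'·v'ᴴ. Then there exists a unique K ∈ M₂(ℂ) with K·u = u' and K·v = v'; moreover this K satisfies Kᴴ·adj(p)·K = adj(p) (K is unitary for the Hermitian inner product determined by adj(p)) and |det K| = 1. (This is the U(2) group-affine structure of the fibres of the bundle of spinor pairs over the space of timelike momenta.) -/

import Mathlib

open Matrix

/-- The space of 2×2 complex matrices. -/
abbrev M2 : Type := Matrix (Fin 2) (Fin 2) ℂ

private def colMat (u v : Fin 2 → ℂ) : M2 := Matrix.of fun i j => ![u, v] j i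

private lemma colMat_mul (K : M2) (u v : Fin 2 → ℂ) :
    K * colMat u v = colMat (K *ᵥ u) (K *ᵥ v) := by
  ext i j
  fin_cases j <;> fin_cases i <;>
    simp [colMat, Matrix.mul_apply, Matrix.mulVec, dotProduct, Fin.sum_univ_two]

private lemma colMat_hermitize (u v : Fin 2 → ℂ) :
    colMat u v * (colMat u v)ᴴ = vecMulVec u (star u) + vecMulVec v (star v) := by
  ext i j
  simp [colMat, Matrix.mul_apply, Matrix.conjTranspose_apply, vecMulVec,
    Fin.sum_univ_two, Pi.star_apply]

private lemma colMat_inj {a b a' b' : Fin 2 → ℂ} (h : colMat a b = colMat a' b') :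
    a = a' ∧ b = b' := by
  constructor <;> funext i
  · exact congrFun (congrFun h i) 0
  · exact congrFun (congrFun h i) 1

/-- U(2) group-affine structure of the fibres of the bundle of spinor pairs over the
space of timelike momenta: if `p := u·uᴴ + v·vᴴ` is invertible and equals
`u'·u'ᴴ + v'·v'ᴴ`, then there is a unique `K ∈ M₂(ℂ)` with `K·u = u'` and `K·v = v'`,
and it satisfies `Kᴴ·adj(p)·K = adj(p)` and `|det K| = 1`. -/
theorem momentum_fiber_unitary_transition (u v u' v' : Fin 2 → ℂ)
    (hinv : IsUnit (vecMulVec u (star u) + vecMulVec v (star v)).det)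
    (heq : vecMulVec u (star u) + vecMulVec v (star v)
         = vecMulVec u' (star u') + vecMulVec v' (star v')) :
    (∃! K : M2, K *ᵥ u = u' ∧ K *ᵥ v = v') ∧
    ∀ K : M2, K *ᵥ u = u' → K *ᵥ v = v' →
      (Kᴴ * (vecMulVec u (star u) + vecMulVec v (star v)).adjugate * K
          = (vecMulVec u (star u) + vecMulVec v (star v)).adjugate
        ∧ ‖K.det‖ = 1) := by
  set p : M2 := vecMulVec u (star u) + vecMulVec v (star v) with hp
  set A : M2 := colMat u v with hA
  set A' : M2 := colMat u' v' with hA'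
  have hAA : A * Aᴴ = p := colMat_hermitize u v
  have hA'A' : A' * A'ᴴ = p := by rw [hA', colMat_hermitize, ← heq]
  have hdetA : IsUnit A.det := by
    have h : IsUnit (A.det * Aᴴ.det) := by rwa [← Matrix.det_mul, hAA]
    exact isUnit_of_mul_isUnit_left h
  have hdetA' : IsUnit A'.det := by
    have h : IsUnit (A'.det * A'ᴴ.det) := by rwa [← Matrix.det_mul, hA'A']
    exact isUnit_of_mul_isUnit_left h
  have key : ∀ K : M2, (K *ᵥ u = u' ∧ K *ᵥ v = v') ↔ K * A = A' := by
    intro K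
    constructor
    · rintro ⟨h1, h2⟩
      rw [hA, hA', colMat_mul, h1, h2]
    · intro h
      have h2 : colMat (K *ᵥ u) (K *ᵥ v) = colMat u' v' := by
        rw [← colMat_mul, ← hA, h, hA']
      exact colMat_inj h2
  have huniq : ∀ K : M2, K * A = A' → K = A' * A⁻¹ := by
    intro K h
    calc K = K * (A * A⁻¹) := by
            rw [Matrix.mul_nonsing_inv _ hdetA, mul_one]
      _ = (K * A) * A⁻¹ := by rw [Matrix.mul_assoc]
      _ = A' * A⁻¹ := by rw [h]
  constructor
  · refine ⟨A' * A⁻¹, ?_, ?_⟩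
    · refine (key _).2 ?_
      rw [Matrix.mul_assoc, Matrix.nonsing_inv_mul _ hdetA, mul_one]
    · intro K hK
      exact huniq K ((key K).1 hK)
  · intro K h1 h2
    have hKA : K * A = A' := (key K).1 ⟨h1, h2⟩
    have hKp : K * p * Kᴴ = p := by
      calc K * p * Kᴴ = (K * A) * ((K * A))ᴴ := by
            rw [← hAA, Matrix.conjTranspose_mul]
            simp only [Matrix.mul_assoc]
        _ = p := by rw [hKA, hA'A']
    have hdetK : IsUnit K.det := by
      have h : IsUnit (K.det * A.det) := by rwa [← Matrix.det_mul, hKA]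
      exact isUnit_of_mul_isUnit_left h
    have hdetKH : IsUnit Kᴴ.det := by
      rw [Matrix.det_conjTranspose]; exact hdetK.star
    have hdet1 : K.det * star K.det = 1 := by
      have hd : (K.det * star K.det) * p.det = 1 * p.det := by
        have := congrArg Matrix.det hKp
        rw [Matrix.det_mul, Matrix.det_mul, Matrix.det_conjTranspose] at this
        rw [one_mul]
        linear_combination this
      exact hinv.mul_right_cancel hd
    constructor
    · -- adjugate part
      have hpinv : Kᴴ * p⁻¹ * K = p⁻¹ := by
        have hrev : p⁻¹ = Kᴴ⁻¹ * (p⁻¹ * K⁻¹) := by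
          conv_lhs => rw [← hKp]
          rw [Matrix.mul_inv_rev, Matrix.mul_inv_rev]
        calc Kᴴ * p⁻¹ * K = Kᴴ * (Kᴴ⁻¹ * (p⁻¹ * K⁻¹)) * K := by rw [← hrev]
          _ = (Kᴴ * Kᴴ⁻¹) * (p⁻¹ * (K⁻¹ * K)) := by simp only [Matrix.mul_assoc]
          _ = p⁻¹ := by
              rw [Matrix.mul_nonsing_inv _ hdetKH, Matrix.nonsing_inv_mul _ hdetK,
                one_mul, mul_one]
      have hadj : p.adjugate = p.det • p⁻¹ := by
        rw [Matrix.inv_def, smul_smul, Ring.mul_inverse_cancel _ hinv, one_smul]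
      rw [hadj, Matrix.mul_smul, Matrix.smul_mul, hpinv]
    · -- determinant part
      have hns : Complex.normSq K.det = 1 := by
        have : (Complex.normSq K.det : ℂ) = 1 := by
          rw [← Complex.mul_conj]; exact hdet1
        exact_mod_cast this
      rw [Complex.norm_def, hns, Real.sqrt_one]
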